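/- For a Hermitian positive definite matrix B partitioned as [[B_k, b],[b*, b_jj]] with condition number κ, one has |b* B_k⁻¹ b| ≤ ((κ − 1)/(κ + 1))² b_jj, and hence |b_jj − b* B_k⁻¹ b| ≤ (2(1 + κ²)/(1 + κ)²) b_jj. -/

import Mathlib

open Matrix Complex
open scoped ComplexOrder

noncomputable def condNum {m : Type*} [Fintype m] [DecidableEq m]
    {M : Matrix m m ℂ} (hM : M.IsHermitian) : ℝ :=
  (⨆ i, hM.eigenvalues i) / (⨅ i, hM.eigenvalues i)


open Matrix Complex

lemma snoc_dotProduct_block {k : ℕ} (B : Matrix (Fin (k+1)) (Fin (k+1)) ℂ)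
    (Bk : Matrix (Fin k) (Fin k) ℂ) (b c' : Fin k → ℂ) (bjj : ℂ)
    (hBk : ∀ i j, B i.castSucc j.castSucc = Bk i j)
    (hb : ∀ i, B i.castSucc (Fin.last k) = b i)
    (hc : ∀ j, B (Fin.last k) j.castSucc = c' j)
    (hbjj : B (Fin.last k) (Fin.last k) = bjj)
    (u : Fin k → ℂ) (z : ℂ) :
    star (Fin.snoc u z) ⬝ᵥ B *ᵥ (Fin.snoc u z)
      = star u ⬝ᵥ Bk *ᵥ u + z * (star u ⬝ᵥ b) + star z * (c' ⬝ᵥ u) + star z * bjj * z := by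
  have hmv : ∀ i, (B *ᵥ Fin.snoc u z) i = (∑ q, B i q.castSucc * u q) + B i (Fin.last k) * z := by
    intro i
    rw [mulVec, dotProduct, Fin.sum_univ_castSucc]
    simp
  have h1 : star u ⬝ᵥ Bk *ᵥ u = ∑ p, star (u p) * (∑ q, Bk p q * u q) := by
    simp [dotProduct, mulVec]
  have h2 : z * (star u ⬝ᵥ b) = ∑ p, star (u p) * (b p * z) := by
    rw [dotProduct, Finset.mul_sum]
    exact Finset.sum_congr rfl fun p _ => by simp; ring
  have h3 : star z * (c' ⬝ᵥ u) = star z * ∑ q, c' q * u q := by rw [dotProduct]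
  rw [dotProduct, Fin.sum_univ_castSucc]
  simp only [Pi.star_apply, Fin.snoc_castSucc, Fin.snoc_last, hmv, hBk, hb, hc, hbjj]
  simp only [mul_add, Finset.sum_add_distrib]
  rw [h1, h2, h3]
  ring

lemma snoc_dotProduct_self {k : ℕ} (u : Fin k → ℂ) (z : ℂ) :
    star (Fin.snoc u z) ⬝ᵥ (Fin.snoc u z) = star u ⬝ᵥ u + star z * z := by
  simp [dotProduct, Fin.sum_univ_castSucc]

open Matrix Complex
open scoped ComplexOrder

lemma rayleigh_bounds {n : Type*} [Fintype n] [DecidableEq n]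
    (A : Matrix n n ℂ) (hA : A.IsHermitian) (x : n → ℂ) :
    (⨅ i, hA.eigenvalues i) * (star x ⬝ᵥ x).re ≤ (star x ⬝ᵥ A.mulVec x).re ∧
      (star x ⬝ᵥ A.mulVec x).re ≤ (⨆ i, hA.eigenvalues i) * (star x ⬝ᵥ x).re := by
  set U : Matrix n n ℂ := (Matrix.IsHermitian.eigenvectorUnitary hA : Matrix n n ℂ) with hU
  set y : n → ℂ := star U *ᵥ x with hy
  have hUU : U * star U = 1 :=
    (Matrix.mem_unitaryGroup_iff).mp (Matrix.IsHermitian.eigenvectorUnitary hA).2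
  have hxy : star x ᵥ* U = star y := by
    rw [hy, star_mulVec, Matrix.star_eq_conjTranspose, conjTranspose_conjTranspose]
  have hE : star x ⬝ᵥ A.mulVec x
      = star y ⬝ᵥ (diagonal (Complex.ofReal ∘ hA.eigenvalues) *ᵥ y) := by
    conv_lhs => rw [hA.spectral_theorem, Unitary.conjStarAlgAut_apply]
    rw [← mulVec_mulVec, ← mulVec_mulVec, dotProduct_mulVec, hxy]
    rfl
  have hUy : U *ᵥ y = x := by rw [hy, mulVec_mulVec, hUU, one_mulVec]
  have hN : star x ⬝ᵥ x = star y ⬝ᵥ y := by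
    conv_lhs => rw [show x = U *ᵥ y from hUy.symm]
    rw [star_mulVec, dotProduct_mulVec, vecMul_vecMul]
    have h1 : Uᴴ * U = 1 := by
      rw [← Matrix.star_eq_conjTranspose]
      exact (Matrix.mem_unitaryGroup_iff').mp (Matrix.IsHermitian.eigenvectorUnitary hA).2
    rw [h1, vecMul_one]
  have hterm : ∀ (f : n → ℝ) (i : n), (star y i * (diagonal (Complex.ofReal ∘ f) *ᵥ y) i).re
      = f i * Complex.normSq (y i) := by
    intro f i
    simp [mulVec_diagonal, ← Complex.normSq_eq_conj_mul_self, mul_left_comm]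
  have hsum : (star y ⬝ᵥ (diagonal (Complex.ofReal ∘ hA.eigenvalues) *ᵥ y)).re
      = ∑ i, hA.eigenvalues i * Complex.normSq (y i) := by
    rw [dotProduct, Complex.re_sum]
    exact Finset.sum_congr rfl fun i _ => hterm _ i
  have hsum2 : (star y ⬝ᵥ y).re = ∑ i, Complex.normSq (y i) := by
    rw [dotProduct, Complex.re_sum]
    refine Finset.sum_congr rfl fun i _ => ?_
    simp [← Complex.normSq_eq_conj_mul_self]
  constructor
  · rw [hE, hN, hsum, hsum2, Finset.mul_sum]
    refine Finset.sum_le_sum fun i _ => ?_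
    exact mul_le_mul_of_nonneg_right
      (ciInf_le (Set.Finite.bddBelow (Set.finite_range _)) i) (Complex.normSq_nonneg _)
  · rw [hE, hN, hsum, hsum2, Finset.mul_sum]
    refine Finset.sum_le_sum fun i _ => ?_
    exact mul_le_mul_of_nonneg_right
      (le_ciSup (Set.Finite.bddAbove (Set.finite_range _)) i) (Complex.normSq_nonneg _)

lemma key_real (α β s w c : ℝ) (hα : 0 < α) (hαβ : α ≤ β) (hs : 0 ≤ s) (hw : 0 ≤ w)
    (hcα : α ≤ c) (hcβ : c ≤ β)
    (h1 : s ^ 2 ≤ (s - α * w) * (c - α)) (h2 : s ^ 2 ≤ (β * w - s) * (β - c)) :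
    s * (α + β) ^ 2 ≤ (β - α) ^ 2 * c := by
  rcases eq_or_lt_of_le hs with hs0 | hs0
  · nlinarith
  rcases eq_or_lt_of_le hαβ with rfl | hab
  · have hc : c = α := le_antisymm hcβ hcα
    subst hc
    nlinarith
  have e1 : α * w * (c - α) ≤ s * (c - α) - s ^ 2 := by nlinarith
  have e2 : s * (β - c) + s ^ 2 ≤ β * w * (β - c) := by nlinarith
  have hchain : α * (c - α) * (s * (β - c) + s ^ 2) ≤ β * (β - c) * (s * (c - α) - s ^ 2) :=
    calc α * (c - α) * (s * (β - c) + s ^ 2) ≤ α * (c - α) * (β * w * (β - c)) := by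
          have h0 : (0:ℝ) ≤ α * (c - α) := by nlinarith
          exact mul_le_mul_of_nonneg_left e2 h0
      _ = β * (β - c) * (α * w * (c - α)) := by ring
      _ ≤ β * (β - c) * (s * (c - α) - s ^ 2) := by
          have h0 : (0:ℝ) ≤ β * (β - c) := by nlinarith
          exact mul_le_mul_of_nonneg_left e1 h0
  have hsb : 0 < s * (β - α) := mul_pos hs0 (by linarith)
  have h3 : s * (β - α) * (s * (α + β - c)) ≤ s * (β - α) * ((β - c) * (c - α)) := by
    nlinarith [hchain]
  have hstar : s * (α + β - c) ≤ (β - c) * (c - α) := le_of_mul_le_mul_left h3 hsb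
  have hid : (α + β) ^ 2 * ((β - c) * (c - α)) ≤ (β - α) ^ 2 * c * (α + β - c) := by
    nlinarith [sq_nonneg (2 * c - α - β), mul_pos hα (lt_trans hα hab)]
  have hpos : 0 < α + β - c := by linarith
  have h4 : (α + β) ^ 2 * (s * (α + β - c)) ≤ (α + β) ^ 2 * ((β - c) * (c - α)) :=
    mul_le_mul_of_nonneg_left hstar (by positivity)
  have h5 : s * (α + β) ^ 2 * (α + β - c) ≤ (β - α) ^ 2 * c * (α + β - c) := by linarith [h4, hid]
  exact le_of_mul_le_mul_right (by linarith) hpos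


set_option maxHeartbeats 1000000 in
/-- For a `(k+1) × (k+1)` Hermitian positive definite matrix
`B = [[B_k, b], [b*, b_jj]]` with condition number `κ`, one has
`|b* B_k⁻¹ b| ≤ ((κ-1)/(κ+1))² b_jj` and hence
`|b_jj - b* B_k⁻¹ b| ≤ (2(1+κ²)/(1+κ)²) b_jj`. -/
theorem corner_schur_scalar_abs_bounds {k : ℕ}
    (B : Matrix (Fin (k + 1)) (Fin (k + 1)) ℂ) (hB : B.PosDef)
    (Bk : Matrix (Fin k) (Fin k) ℂ) (b : Fin k → ℂ) (bjj : ℂ)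
    (hBk : Bk = B.submatrix Fin.castSucc Fin.castSucc)
    (hb : b = fun i => B i.castSucc (Fin.last k))
    (hbjj : bjj = B (Fin.last k) (Fin.last k))
    (κ : ℝ) (hκ : κ = condNum hB.isHermitian) :
    ‖star b ⬝ᵥ Bk⁻¹.mulVec b‖ ≤ ((κ - 1) / (κ + 1)) ^ 2 * bjj.re ∧
      ‖bjj - star b ⬝ᵥ Bk⁻¹.mulVec b‖ ≤
        2 * (1 + κ ^ 2) / (1 + κ) ^ 2 * bjj.re := by
  -- eigenvalue extremes
  set α : ℝ := ⨅ i, hB.isHermitian.eigenvalues i with hal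
  set β : ℝ := ⨆ i, hB.isHermitian.eigenvalues i with hbe
  have hκβα : κ = β / α := by rw [hκ, condNum]
  have hα : 0 < α := by
    obtain ⟨i, hi⟩ := exists_eq_ciInf_of_finite (f := hB.isHermitian.eigenvalues)
    rw [hal, ← hi]
    exact hB.eigenvalues_pos i
  have hαβ : α ≤ β :=
    le_trans (ciInf_le (Set.Finite.bddBelow (Set.finite_range _)) 0)
      (le_ciSup (Set.Finite.bddAbove (Set.finite_range _)) 0)
  -- block entries
  have hpt : ∀ i j, B i.castSucc j.castSucc = Bk i j := fun i j => by rw [hBk]; rfl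
  have hptb : ∀ i, B i.castSucc (Fin.last k) = b i := fun i => by rw [hb]
  have hptc : ∀ j, B (Fin.last k) j.castSucc = (star b) j := fun j => by
    rw [Pi.star_apply, ← hptb j]
    exact (hB.isHermitian.apply _ _).symm
  have hptd : B (Fin.last k) (Fin.last k) = bjj := hbjj.symm
  -- Bk is positive definite
  have hBkH : Bk.IsHermitian := by rw [hBk]; exact hB.isHermitian.submatrix _
  have hBkP : Bk.PosDef := by
    refine PosDef.of_dotProduct_mulVec_pos hBkH fun x hx => ?_
    have hy : (Fin.snoc x 0 : Fin (k+1) → ℂ) ≠ 0 := by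
      intro h
      apply hx
      funext i
      have := congrFun h i.castSucc
      simpa [Fin.snoc_castSucc] using this
    have h0 := hB.dotProduct_mulVec_pos hy
    rw [snoc_dotProduct_block B Bk b (star b) bjj hpt hptb hptc hptd x 0] at h0
    simpa using h0
  have hdet : IsUnit Bk.det := (Matrix.isUnit_iff_isUnit_det _).mp hBkP.isUnit
  set v : Fin k → ℂ := Bk⁻¹ *ᵥ b with hv
  have hBv : Bk *ᵥ v = b := by
    rw [hv, mulVec_mulVec, Matrix.mul_nonsing_inv _ hdet, one_mulVec]
  set sC : ℂ := star b ⬝ᵥ v with hsCdef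
  have hsC : 0 ≤ sC := hBkP.inv.posSemidef.dotProduct_mulVec_nonneg b
  set s : ℝ := sC.re with hs
  have hsim : sC.im = 0 := ((Complex.le_def.mp hsC).2).symm.trans (by simp)
  have hsCr : sC = (s : ℂ) := by
    apply Complex.ext <;> simp [hs, hsim]
  have hs0 : 0 ≤ s := by
    have := (Complex.le_def.mp hsC).1
    simpa [hs] using this
  have hvb : star v ⬝ᵥ b = (s : ℂ) := by
    rw [Matrix.star_dotProduct, ← hsCdef, hsCr]
    simp
  have hvBv : star v ⬝ᵥ Bk *ᵥ v = (s : ℂ) := by rw [hBv]; exact hvb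
  have hwC : 0 ≤ star v ⬝ᵥ v := dotProduct_star_self_nonneg v
  set w : ℝ := (star v ⬝ᵥ v).re with hwdef
  have hwim : (star v ⬝ᵥ v).im = 0 := ((Complex.le_def.mp hwC).2).symm.trans (by simp)
  have hwr : star v ⬝ᵥ v = (w : ℂ) := by apply Complex.ext <;> simp [hwdef, hwim]
  have hw0 : 0 ≤ w := by
    have := (Complex.le_def.mp hwC).1
    simpa [hwdef] using this
  set c : ℝ := bjj.re with hc
  -- quadratic form evaluations
  have hQ : ∀ t : ℝ, star (Fin.snoc ((t:ℂ) • v) 1) ⬝ᵥ B *ᵥ (Fin.snoc ((t:ℂ) • v) 1)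
      = (((t^2 + 2*t) * s : ℝ) : ℂ) + bjj := by
    intro t
    rw [snoc_dotProduct_block B Bk b (star b) bjj hpt hptb hptc hptd]
    rw [star_smul, smul_dotProduct, Matrix.mulVec_smul, dotProduct_smul, hvBv,
      smul_dotProduct, hvb, dotProduct_smul, ← hsCdef, hsCr]
    simp only [smul_eq_mul, star_trivial, RCLike.star_def, Complex.conj_ofReal, star_one,
      one_mul, mul_one]
    push_cast
    ring
  have hQre : ∀ t : ℝ, (star (Fin.snoc ((t:ℂ) • v) 1) ⬝ᵥ B *ᵥ (Fin.snoc ((t:ℂ) • v) 1)).re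
      = (t^2 + 2*t) * s + c := by
    intro t
    rw [hQ t, Complex.add_re, Complex.ofReal_re, hc]
  have hNre : ∀ t : ℝ, (star (Fin.snoc ((t:ℂ) • v) 1) ⬝ᵥ (Fin.snoc ((t:ℂ) • v) 1)).re
      = t^2 * w + 1 := by
    intro t
    rw [snoc_dotProduct_self, star_smul, smul_dotProduct, dotProduct_smul, hwr]
    simp only [smul_eq_mul, RCLike.star_def, Complex.conj_ofReal, star_one, one_mul, mul_one]
    push_cast
    ring_nf
    norm_cast
  have hray : ∀ t : ℝ, α * (t^2 * w + 1) ≤ (t^2 + 2*t) * s + c ∧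
      (t^2 + 2*t) * s + c ≤ β * (t^2 * w + 1) := by
    intro t
    have h := rayleigh_bounds B hB.isHermitian (Fin.snoc ((t:ℂ) • v) 1)
    rw [hQre t, hNre t] at h
    exact h
  have hcα : α ≤ c := by have := (hray 0).1; simpa using this
  have hcβ : c ≤ β := by have := (hray 0).2; simpa using this
  -- discriminant bounds
  have k1 : s ^ 2 ≤ (s - α * w) * (c - α) := by
    have d1 : discrim (s - α*w) (2*s) (c - α) ≤ 0 := by
      apply discrim_le_zero
      intro t
      have h := (hray t).1
      nlinarith [h]
    rw [discrim] at d1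
    nlinarith [d1]
  have k2 : s ^ 2 ≤ (β * w - s) * (β - c) := by
    have d2 : discrim (β*w - s) (-(2*s)) (β - c) ≤ 0 := by
      apply discrim_le_zero
      intro t
      have h := (hray t).2
      nlinarith [h]
    rw [discrim] at d2
    nlinarith [d2]
  have key := key_real α β s w c hα hαβ hs0 hw0 hcα hcβ k1 k2
  -- packaging
  have hκ1 : 1 ≤ κ := by
    rw [hκβα, le_div_iff₀ hα]
    linarith
  have hαβpos : 0 < α + β := by linarith
  have hfrac : (κ - 1) / (κ + 1) = (β - α) / (α + β) := by
    rw [hκβα, div_sub_one hα.ne', div_add_one hα.ne', div_div_div_cancel_right₀ hα.ne', add_comm α β]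
  have goal1 : ‖sC‖ ≤ ((κ - 1) / (κ + 1)) ^ 2 * c := by
    rw [hsCr, Complex.norm_real, Real.norm_eq_abs, _root_.abs_of_nonneg hs0, hfrac, div_pow, div_mul_eq_mul_div,
      le_div_iff₀ (by positivity)]
    nlinarith [key]
  refine ⟨goal1, ?_⟩
  -- second bound
  have hbim : bjj.im = 0 := by
    have h := hB.isHermitian.apply (Fin.last k) (Fin.last k)
    rw [hptd] at h
    exact Complex.conj_eq_iff_im.mp h
  have hbjjr : bjj = (c : ℂ) := by apply Complex.ext <;> simp [hc, hbim]
  have hc0 : 0 ≤ c := le_trans hα.le hcα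
  have hfle : ((κ - 1) / (κ + 1)) ^ 2 ≤ 1 := by
    rw [hfrac, div_pow]
    rw [div_le_one (by positivity)]
    nlinarith
  have hslec : s ≤ c := by
    calc s ≤ ((κ - 1) / (κ + 1)) ^ 2 * c := by
          have h := goal1
          rwa [hsCr, Complex.norm_real, Real.norm_eq_abs, _root_.abs_of_nonneg hs0] at h
      _ ≤ 1 * c := mul_le_mul_of_nonneg_right hfle hc0
      _ = c := one_mul c
  have hfactor : 1 ≤ 2 * (1 + κ^2) / (1 + κ)^2 := by
    rw [le_div_iff₀ (by positivity : (0:ℝ) < (1 + κ)^2)]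
    nlinarith [sq_nonneg (κ - 1)]
  rw [hbjjr, hsCr, ← Complex.ofReal_sub, Complex.norm_real, Real.norm_eq_abs, _root_.abs_of_nonneg (by linarith)]
  have := mul_le_mul_of_nonneg_right hfactor hc0
  linarith
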